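/- For each r ≥ 0 and n ≥ r, the (n-r)-th coefficient of the (r+1)-fold convolution of the shifted Catalan sequence (C_{m+1})_{m≥0} equals (2(r+1)/(n+r+2)) * binomial(2n+1, n-r). That is, the sum over compositions n_1 + ... + n_{r+1} = n - r of nonnegative integers of the product C_{n_1+1} * C_{n_2+1} * ... * C_{n_{r+1}+1} equals (2(r+1)/(n+r+2)) * binomial(2n+1, n-r), where C_m = (1/(m+1)) * binomial(2m, m) is the m-th Catalan number. -/

import Mathlib

open PowerSeries Finset

/-- The Catalan generating function as a power series over ℚ. -/
noncomputable def CatalanSeries : PowerSeries ℚ := PowerSeries.mk fun m => (catalan m : ℚ)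

lemma coeff_CatalanSeries (m : ℕ) :
    PowerSeries.coeff m CatalanSeries = (catalan m : ℚ) := PowerSeries.coeff_mk _ _

lemma coeff_CatalanSeries_sq (m : ℕ) :
    PowerSeries.coeff m (CatalanSeries ^ 2) = (catalan (m + 1) : ℚ) := by
  rw [sq, PowerSeries.coeff_mul, catalan_succ']
  push_cast
  exact Finset.sum_congr rfl fun p _ => by rw [coeff_CatalanSeries, coeff_CatalanSeries]

lemma CatalanSeries_eq : CatalanSeries = 1 + PowerSeries.X * CatalanSeries ^ 2 := by
  ext m
  cases m with
  | zero =>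
    simp [CatalanSeries]
  | succ m =>
    rw [map_add, PowerSeries.coeff_succ_X_mul, coeff_CatalanSeries, coeff_CatalanSeries_sq,
      PowerSeries.coeff_one]
    simp

lemma sum_antidiagonalTuple_succ {M : Type*} [AddCommMonoid M] (k n : ℕ)
    (F : (Fin (k + 1) → ℕ) → M) :
    ∑ f ∈ Finset.Nat.antidiagonalTuple (k + 1) n, F f
      = ∑ p ∈ Finset.HasAntidiagonal.antidiagonal n, ∑ g ∈ Finset.Nat.antidiagonalTuple k p.2,
          F (Fin.cons p.1 g) := by
  rw [← Finset.sum_sigma (Finset.HasAntidiagonal.antidiagonal n) (fun p => Finset.Nat.antidiagonalTuple k p.2)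
    (fun x => F (Fin.cons x.1.1 x.2))]
  refine Finset.sum_nbij' (fun f => (⟨(f 0, ∑ i, Fin.tail f i), Fin.tail f⟩ :
      (Σ _p : ℕ × ℕ, Fin k → ℕ))) (fun x => Fin.cons x.1.1 x.2) ?_ ?_ ?_ ?_ ?_
  · intro f hf
    rw [Finset.Nat.mem_antidiagonalTuple] at hf
    rw [Finset.mem_sigma, Finset.Nat.mem_antidiagonalTuple, Finset.HasAntidiagonal.mem_antidiagonal]
    constructor
    · rw [← hf, Fin.sum_univ_succ]; rfl
    · rfl
  · intro x hx
    rw [Finset.mem_sigma, Finset.Nat.mem_antidiagonalTuple, Finset.HasAntidiagonal.mem_antidiagonal] at hx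
    rw [Finset.Nat.mem_antidiagonalTuple, Fin.sum_cons, hx.2, hx.1]
  · intro f _; exact Fin.cons_self_tail f
  · intro x hx
    rw [Finset.mem_sigma, Finset.Nat.mem_antidiagonalTuple, Finset.HasAntidiagonal.mem_antidiagonal] at hx
    refine Sigma.ext ?_ ?_
    · simp [Fin.tail_cons, hx.2]
    · simp [Fin.tail_cons]
  · intro f _; rw [Fin.cons_self_tail]

lemma coeff_pow_tuple (φ : PowerSeries ℚ) : ∀ k m, PowerSeries.coeff m (φ ^ k) =
    ∑ f ∈ Finset.Nat.antidiagonalTuple k m, ∏ i, PowerSeries.coeff (f i) φ := by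
  intro k
  induction k with
  | zero =>
    intro m
    cases m with
    | zero => simp [Finset.Nat.antidiagonalTuple_zero_zero]
    | succ m => simp [Finset.Nat.antidiagonalTuple_zero_succ, PowerSeries.coeff_one]
  | succ k ih =>
    intro m
    rw [pow_succ', PowerSeries.coeff_mul, sum_antidiagonalTuple_succ]
    refine Finset.sum_congr rfl fun p hp => ?_
    rw [ih p.2, Finset.mul_sum]
    refine Finset.sum_congr rfl fun g _ => ?_
    rw [Fin.prod_univ_succ]
    simp [Fin.cons_zero, Fin.cons_succ]

lemma coeff_CatalanSeries_pow : ∀ m k : ℕ, PowerSeries.coeff m (CatalanSeries ^ (k + 1)) =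
    ((k : ℚ) + 1) / (m + k + 1) * ((2 * m + k).choose m) := by
  intro m
  induction m with
  | zero =>
    intro k
    rw [PowerSeries.coeff_zero_eq_constantCoeff, map_pow]
    have h0 : PowerSeries.constantCoeff CatalanSeries = 1 := by
      simp [CatalanSeries]
    rw [h0, one_pow, Nat.choose_zero_right]
    have : (k : ℚ) + 1 ≠ 0 := by positivity
    push_cast
    field_simp
    ring
  | succ m IHm =>
    intro k
    induction k with
    | zero =>
      rw [pow_one, coeff_CatalanSeries]
      have h := succ_mul_catalan_eq_centralBinom (m + 1)
      have h2 : Nat.centralBinom (m + 1) = (2 * (m + 1)).choose (m + 1) := rfl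
      rw [h2] at h
      have hm : (m : ℚ) + 1 + 0 + 1 ≠ 0 := by positivity
      have := congrArg (fun x : ℕ => (x : ℚ)) h
      push_cast at this ⊢
      field_simp
      simp only [add_zero, zero_add, one_mul] at *
      linarith [this]
    | succ k IHk =>
      have hrec : CatalanSeries ^ (k + 2) =
          CatalanSeries ^ (k + 1) + PowerSeries.X * CatalanSeries ^ (k + 3) := by
        calc CatalanSeries ^ (k + 2) = CatalanSeries ^ (k + 1) * CatalanSeries := by ring
          _ = CatalanSeries ^ (k + 1) * (1 + PowerSeries.X * CatalanSeries ^ 2) := by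
              rw [← CatalanSeries_eq]
          _ = CatalanSeries ^ (k + 1) + PowerSeries.X * CatalanSeries ^ (k + 3) := by ring
      rw [hrec, map_add, PowerSeries.coeff_succ_X_mul, IHk, IHm (k + 2)]
      -- now a rational binomial identity
      have hpascal : (2 * (m + 1) + (k + 1)).choose (m + 1)
          = (2 * m + k + 2).choose m + (2 * m + k + 2).choose (m + 1) := by
        have : 2 * (m + 1) + (k + 1) = (2 * m + k + 2) + 1 := by ring
        rw [this, Nat.choose_succ_succ']
      have harg1 : 2 * (m + 1) + k = 2 * m + k + 2 := by ring
      have hrel : ((2 * m + k + 2).choose (m + 1) : ℚ) * (m + 1)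
          = ((2 * m + k + 2).choose m : ℚ) * (m + k + 2) := by
        have := Nat.choose_succ_right_eq (2 * m + k + 2) m
        have hsub : 2 * m + k + 2 - m = m + k + 2 := by omega
        rw [hsub] at this
        exact_mod_cast congrArg (fun x : ℕ => (x : ℚ)) this
      have harg2 : 2 * m + (k + 2) = 2 * m + k + 2 := by ring
      rw [hpascal, harg1, harg2]
      push_cast
      generalize hX : (((2 * m + k + 2).choose (m + 1) : ℕ) : ℚ) = x at hrel ⊢
      generalize hY : (((2 * m + k + 2).choose m : ℕ) : ℚ) = y at hrel ⊢
      have h1 : (m : ℚ) + 1 ≠ 0 := by positivity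
      have h2 : (m : ℚ) + (k : ℚ) + 2 ≠ 0 := by positivity
      have h3 : (m : ℚ) + (k : ℚ) + 3 ≠ 0 := by positivity
      have hxy : x = y * ((m : ℚ) + k + 2) / ((m : ℚ) + 1) := by
        field_simp
        linarith [hrel]
      rw [hxy]
      field_simp
      ring

/-- The (n-r)-th coefficient of the (r+1)-fold convolution of the shifted Catalan
sequence (C_{m+1}) equals (2(r+1)/(n+r+2)) * binom(2n+1, n-r). -/
theorem catalan_convolution (n r : ℕ) (hr : r ≤ n) :
    ((∑ f ∈ Finset.Nat.antidiagonalTuple (r + 1) (n - r),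
        ∏ i : Fin (r + 1), catalan (f i + 1) : ℕ) : ℚ) =
      2 * (r + 1) / (n + r + 2) * Nat.choose (2 * n + 1) (n - r) := by
  have hS : ((∑ f ∈ Finset.Nat.antidiagonalTuple (r + 1) (n - r),
        ∏ i : Fin (r + 1), catalan (f i + 1) : ℕ) : ℚ)
      = PowerSeries.coeff (n - r) ((CatalanSeries ^ 2) ^ (r + 1)) := by
    rw [coeff_pow_tuple]
    push_cast
    exact Finset.sum_congr rfl fun f _ => Finset.prod_congr rfl fun i _ => by
      rw [coeff_CatalanSeries_sq]
  rw [hS]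
  have hpow : (CatalanSeries ^ 2) ^ (r + 1) = CatalanSeries ^ (2 * r + 1 + 1) := by
    rw [← pow_mul]; ring_nf
  rw [hpow, coeff_CatalanSeries_pow (n - r) (2 * r + 1)]
  have harg : 2 * (n - r) + (2 * r + 1) = 2 * n + 1 := by omega
  rw [harg]
  have hden : (n : ℚ) + r + 2 ≠ 0 := by positivity
  push_cast [Nat.cast_sub hr]
  have hne : (n : ℚ) - r + (2 * r + 1) + 1 ≠ 0 := by
    have h : (n : ℚ) - r + (2 * r + 1) + 1 = (n : ℚ) + r + 2 := by ring
    rw [h]; positivity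
  field_simp
  ring
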